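/- For all n ≥ 1 and i, j ≥ 0, the coefficients a_{n,i,j} satisfy a_{2n,i,j} = (2i+1)a_{2n-1,i,j-1} + (2j+1)a_{2n-1,i-1,j} + (4n-2i-2j+1)a_{2n-1,i-1,j-1}. -/

import Mathlib

open MvPolynomial Finset

/-- The Dumont derivation on `ℚ[x,y,z]`: `D x = y*z`, `D y = x*z`, `D z = x*y`. -/
noncomputable def Dum : Derivation ℚ (MvPolynomial (Fin 3) ℚ) (MvPolynomial (Fin 3) ℚ) :=
  MvPolynomial.mkDerivation ℚ ![X 1 * X 2, X 0 * X 2, X 0 * X 1]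

/-- The operator `p ↦ x * D p`. -/
noncomputable def xD : MvPolynomial (Fin 3) ℚ → MvPolynomial (Fin 3) ℚ :=
  fun p => X 0 * Dum p

/-- `aC n i j` is the coefficient `a_{n,i,j}` of `(xD)^n(x)`:
for even `n`, the coefficient of `x^(2i+1) y^(2j) z^(2n-2i-2j)`;
for odd `n`, the coefficient of `x^(2i+1) y^(2j+1) z^(2n-1-2i-2j)`.
Coefficients with negative indices are `0`. -/
noncomputable def aC (n : ℕ) (i j : ℤ) : ℚ :=
  if 0 ≤ i ∧ 0 ≤ j then
    MvPolynomial.coeff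
      (Finsupp.single 0 (2*i+1).toNat
        + Finsupp.single 1 ((if Even n then 2*j else 2*j+1).toNat)
        + Finsupp.single 2 ((2*(n:ℤ) - 2*i - 2*j - if Even n then 0 else 1).toNat))
      (xD^[n] (X 0))
  else 0

/-- monomial exponent vector (a, b, c) on Fin 3 -/
noncomputable def M (a b c : ℕ) : Fin 3 →₀ ℕ :=
  Finsupp.single 0 a + Finsupp.single 1 b + Finsupp.single 2 c

lemma M_apply0 (a b c : ℕ) : M a b c 0 = a := by
  simp [M, Finsupp.single_apply]

lemma M_apply1 (a b c : ℕ) : M a b c 1 = b := by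
  simp [M, Finsupp.single_apply]

lemma M_apply2 (a b c : ℕ) : M a b c 2 = c := by
  simp [M, Finsupp.single_apply]

lemma M_eta (m : Fin 3 →₀ ℕ) : M (m 0) (m 1) (m 2) = m := by
  ext x
  fin_cases x <;> simp [M, Finsupp.single_apply]

lemma M_le (a b c a' b' c' : ℕ) : M a b c ≤ M a' b' c' ↔ a ≤ a' ∧ b ≤ b' ∧ c ≤ c' := by
  rw [Finsupp.le_def]
  constructor
  · intro h
    exact ⟨by simpa [M_apply0] using h 0, by simpa [M_apply1] using h 1,
      by simpa [M_apply2] using h 2⟩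
  · rintro ⟨h1, h2, h3⟩ x
    fin_cases x <;> simp [M_apply0, M_apply1, M_apply2, *]

lemma M_sub (a b c a' b' c' : ℕ) : M a b c - M a' b' c' = M (a - a') (b - b') (c - c') := by
  ext x
  fin_cases x <;> simp [M, Finsupp.single_apply]

lemma M_add (a b c a' b' c' : ℕ) : M a b c + M a' b' c' = M (a + a') (b + b') (c + c') := by
  ext x
  fin_cases x <;> simp [M, Finsupp.single_apply]

lemma single0_eq (a : ℕ) : Finsupp.single (0 : Fin 3) a = M a 0 0 := by simp [M]
lemma single1_eq (b : ℕ) : Finsupp.single (1 : Fin 3) b = M 0 b 0 := by simp [M]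
lemma single2_eq (c : ℕ) : Finsupp.single (2 : Fin 3) c = M 0 0 c := by simp [M]

lemma coeff_pderiv (i : Fin 3) (m : Fin 3 →₀ ℕ) (p : MvPolynomial (Fin 3) ℚ) :
    coeff m (pderiv i p) = ((m i + 1 : ℕ) : ℚ) * coeff (m + Finsupp.single i 1) p := by
  induction p using MvPolynomial.induction_on' with
  | add p q hp hq => simp [hp, hq, mul_add]
  | monomial s a =>
    rw [pderiv_monomial]
    rw [coeff_monomial, coeff_monomial]
    by_cases h : s = m + Finsupp.single i 1
    · subst h
      have h1 : m + Finsupp.single i 1 - Finsupp.single i 1 = m := by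
        ext x; simp [Finsupp.add_apply, Finsupp.tsub_apply, Finsupp.single_apply]
      have h2 : ((m + Finsupp.single i 1 : Fin 3 →₀ ℕ)) i = m i + 1 := by
        simp [Finsupp.add_apply]
      rw [if_pos h1, if_pos rfl, h2]
      push_cast; ring
    · rw [if_neg h]
      by_cases h2 : s - Finsupp.single i 1 = m
      · have hsi : s i = 0 := by
          by_contra hne
          apply h
          ext x
          by_cases hx : x = i
          · subst hx
            have := DFunLike.congr_fun h2 x
            simp [Finsupp.tsub_apply] at this ⊢
            omega
          · have := DFunLike.congr_fun h2 x
            simp [Finsupp.tsub_apply, Finsupp.single_apply, Ne.symm hx] at this ⊢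
            omega
        rw [if_pos h2, hsi]
        simp
      · rw [if_neg h2]; simp

lemma Dum_apply (p : MvPolynomial (Fin 3) ℚ) :
    Dum p = X 1 * X 2 * pderiv 0 p + X 0 * X 2 * pderiv 1 p + X 0 * X 1 * pderiv 2 p := by
  have h : Dum = (X 1 * X 2 : MvPolynomial (Fin 3) ℚ) • (pderiv 0)
      + (X 0 * X 2 : MvPolynomial (Fin 3) ℚ) • (pderiv 1)
      + (X 0 * X 1 : MvPolynomial (Fin 3) ℚ) • (pderiv 2) := by
    apply MvPolynomial.derivation_ext
    intro i
    fin_cases i <;>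
      simp [Dum, MvPolynomial.mkDerivation_X, pderiv_X, Pi.single_apply, Fin.ext_iff]
  rw [h]
  simp [smul_eq_mul]

lemma xD_eq (p : MvPolynomial (Fin 3) ℚ) :
    X 0 * Dum p = monomial (M 1 1 1) 1 * pderiv 0 p
      + monomial (M 2 0 1) 1 * pderiv 1 p + monomial (M 2 1 0) 1 * pderiv 2 p := by
  have hX : ∀ i : Fin 3, (X i : MvPolynomial (Fin 3) ℚ) = monomial (Finsupp.single i 1) 1 := by
    intro i; rfl
  have m1 : (Finsupp.single (0:Fin 3) 1) + ((Finsupp.single (1:Fin 3) 1)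
      + (Finsupp.single (2:Fin 3) 1)) = M 1 1 1 := by
    ext x; fin_cases x <;> simp [M, Finsupp.single_apply]
  have m2 : (Finsupp.single (0:Fin 3) 1) + ((Finsupp.single (0:Fin 3) 1)
      + (Finsupp.single (2:Fin 3) 1)) = M 2 0 1 := by
    ext x; fin_cases x <;> simp [M, Finsupp.single_apply]
  have m3 : (Finsupp.single (0:Fin 3) 1) + ((Finsupp.single (0:Fin 3) 1)
      + (Finsupp.single (1:Fin 3) 1)) = M 2 1 0 := by
    ext x; fin_cases x <;> simp [M, Finsupp.single_apply]
  have e1 : (X 0 : MvPolynomial (Fin 3) ℚ) * (X 1 * X 2) = monomial (M 1 1 1) 1 := by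
    rw [hX 0, hX 1, hX 2, monomial_mul, monomial_mul, one_mul, m1, mul_one]
  have e2 : (X 0 : MvPolynomial (Fin 3) ℚ) * (X 0 * X 2) = monomial (M 2 0 1) 1 := by
    rw [hX 0, hX 2, monomial_mul, monomial_mul, one_mul, m2, mul_one]
  have e3 : (X 0 : MvPolynomial (Fin 3) ℚ) * (X 0 * X 1) = monomial (M 2 1 0) 1 := by
    rw [hX 0, hX 1, monomial_mul, monomial_mul, one_mul, m3, mul_one]
  rw [Dum_apply]
  have hr : X 0 * (X 1 * X 2 * pderiv 0 p + X 0 * X 2 * pderiv 1 p + X 0 * X 1 * pderiv 2 p)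
      = (X 0 * (X 1 * X 2)) * pderiv 0 p + (X 0 * (X 0 * X 2)) * pderiv 1 p
        + (X 0 * (X 0 * X 1)) * pderiv 2 p := by ring
  rw [hr, e1, e2, e3]

lemma coeff_xD (q : MvPolynomial (Fin 3) ℚ) (a b c : ℕ) :
    coeff (M a b c) (X 0 * Dum q) =
      (if 1 ≤ a ∧ 1 ≤ b ∧ 1 ≤ c then (a : ℚ) * coeff (M a (b-1) (c-1)) q else 0)
    + (if 2 ≤ a ∧ 1 ≤ c then ((b : ℚ)+1) * coeff (M (a-2) (b+1) (c-1)) q else 0)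
    + (if 2 ≤ a ∧ 1 ≤ b then ((c : ℚ)+1) * coeff (M (a-2) (b-1) (c+1)) q else 0) := by
  rw [xD_eq, coeff_add, coeff_add,
    coeff_monomial_mul', coeff_monomial_mul', coeff_monomial_mul']
  simp only [M_le, M_sub, one_mul]
  congr 1
  congr 1
  · by_cases h : 1 ≤ a ∧ 1 ≤ b ∧ 1 ≤ c
    · rw [if_pos h, if_pos ⟨h.1, h.2⟩, coeff_pderiv, single0_eq, M_add, M_apply0]
      have e : a - 1 + 1 = a := by omega
      simp only [Nat.add_zero, e]
    · rw [if_neg h, if_neg (by omega : ¬ (1 ≤ a ∧ 1 ≤ b ∧ 1 ≤ c))]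
  · by_cases h : 2 ≤ a ∧ 1 ≤ c
    · rw [if_pos ⟨h.1, Nat.zero_le _, h.2⟩, if_pos h, coeff_pderiv, single1_eq, M_add, M_apply1]
      simp only [Nat.sub_zero, Nat.add_zero, Nat.cast_add, Nat.cast_one]
    · rw [if_neg (by omega : ¬ (2 ≤ a ∧ 0 ≤ b ∧ 1 ≤ c)), if_neg h]
  · by_cases h : 2 ≤ a ∧ 1 ≤ b
    · rw [if_pos ⟨h.1, h.2, Nat.zero_le _⟩, if_pos h, coeff_pderiv, single2_eq, M_add, M_apply2]
      simp only [Nat.sub_zero, Nat.add_zero, Nat.cast_add, Nat.cast_one]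
    · rw [if_neg (by omega : ¬ (2 ≤ a ∧ 1 ≤ b ∧ 0 ≤ c)), if_neg h]

lemma coeff_M_zero (p : MvPolynomial (Fin 3) ℚ) (a b c : ℕ) (h : p.totalDegree < a + b + c) :
    coeff (M a b c) p = 0 := by
  apply coeff_eq_zero_of_totalDegree_lt
  have hs : ∑ i ∈ (M a b c).support, (M a b c) i = a + b + c := by
    rw [Finset.sum_subset (Finset.subset_univ _)
        (fun x _ hx => by simpa using Finsupp.notMem_support_iff.mp hx),
      Fin.sum_univ_three, M_apply0, M_apply1, M_apply2]
  rw [hs]; exact h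

lemma totalDegree_xD (p : MvPolynomial (Fin 3) ℚ) :
    (X 0 * Dum p).totalDegree ≤ p.totalDegree + 2 := by
  rw [totalDegree]
  apply Finset.sup_le
  intro m hm
  rw [mem_support_iff] at hm
  by_contra hlt
  push_neg at hlt
  apply hm
  have hsum : (m.sum fun _ e => e) = m 0 + m 1 + m 2 := by
    rw [Finsupp.sum, Finset.sum_subset (Finset.subset_univ _)
        (fun x _ hx => by simpa using Finsupp.notMem_support_iff.mp hx),
      Fin.sum_univ_three]
  rw [hsum] at hlt
  rw [← M_eta m, coeff_xD]
  have T1 : (if 1 ≤ m 0 ∧ 1 ≤ m 1 ∧ 1 ≤ m 2 then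
      ((m 0 : ℚ)) * coeff (M (m 0) (m 1 - 1) (m 2 - 1)) p else 0) = 0 := by
    split_ifs with h
    · rw [coeff_M_zero p _ _ _ (by omega)]; ring
    · rfl
  have T2 : (if 2 ≤ m 0 ∧ 1 ≤ m 2 then
      ((m 1 : ℚ)+1) * coeff (M (m 0 - 2) (m 1 + 1) (m 2 - 1)) p else 0) = 0 := by
    split_ifs with h
    · rw [coeff_M_zero p _ _ _ (by omega)]; ring
    · rfl
  have T3 : (if 2 ≤ m 0 ∧ 1 ≤ m 1 then
      ((m 2 : ℚ)+1) * coeff (M (m 0 - 2) (m 1 - 1) (m 2 + 1)) p else 0) = 0 := by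
    split_ifs with h
    · rw [coeff_M_zero p _ _ _ (by omega)]; ring
    · rfl
  rw [T1, T2, T3]; ring

lemma deg_iter (k : ℕ) :
    (((fun p => X 0 * Dum p)^[k] (X 0)) : MvPolynomial (Fin 3) ℚ).totalDegree ≤ 2*k+1 := by
  induction k with
  | zero => simpa using le_of_eq (totalDegree_X 0)
  | succ k ih =>
    rw [Function.iterate_succ_apply']
    exact le_trans (totalDegree_xD _) (by omega)

lemma coeff_xD' (q : MvPolynomial (Fin 3) ℚ) (a b c : ℕ) :
    coeff (M a b c) (xD q) =
      (if 1 ≤ a ∧ 1 ≤ b ∧ 1 ≤ c then (a : ℚ) * coeff (M a (b-1) (c-1)) q else 0)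
    + (if 2 ≤ a ∧ 1 ≤ c then ((b : ℚ)+1) * coeff (M (a-2) (b+1) (c-1)) q else 0)
    + (if 2 ≤ a ∧ 1 ≤ b then ((c : ℚ)+1) * coeff (M (a-2) (b-1) (c+1)) q else 0) :=
  coeff_xD q a b c

lemma aC_eq (n : ℕ) (i j : ℤ) (hi : 0 ≤ i) (hj : 0 ≤ j) :
    aC n i j = MvPolynomial.coeff
      (M (2*i+1).toNat ((if Even n then 2*j else 2*j+1).toNat)
        ((2*(n:ℤ) - 2*i - 2*j - if Even n then 0 else 1).toNat)) (xD^[n] (X 0)) := by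
  rw [aC, if_pos ⟨hi, hj⟩]; rfl

lemma aC_neg {n : ℕ} {i j : ℤ} (h : ¬ (0 ≤ i ∧ 0 ≤ j)) : aC n i j = 0 := by
  rw [aC, if_neg h]

theorem stmt1 (n : ℕ) (hn : 1 ≤ n) (i j : ℤ) (hi : 0 ≤ i) (hj : 0 ≤ j) :
    aC (2*n) i j =
      (2*(i:ℚ)+1) * aC (2*n-1) i (j-1) + (2*(j:ℚ)+1) * aC (2*n-1) (i-1) j
        + (4*(n:ℚ)-2*(i:ℚ)-2*(j:ℚ)+1) * aC (2*n-1) (i-1) (j-1) := by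
  lift i to ℕ using hi with i'
  lift j to ℕ using hj with j'
  have hE2 : Even (2*n) := even_two_mul n
  have hO : ¬ Even (2*n-1) := by
    rw [show 2*n-1 = 2*(n-1)+1 by omega]
    simp [Nat.even_add_one, Nat.even_mul]
  have hdeg : ((xD^[2*n-1] (X 0)) : MvPolynomial (Fin 3) ℚ).totalDegree ≤ 4*n-1 := by
    have := deg_iter (2*n-1)
    have h2 : 2*(2*n-1)+1 = 4*n-1 := by omega
    rw [h2] at this
    exact this
  have hit : (xD^[2*n] (X 0) : MvPolynomial (Fin 3) ℚ) = xD (xD^[2*n-1] (X 0)) := by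
    conv_lhs => rw [show 2*n = (2*n-1)+1 by omega]
    rw [Function.iterate_succ_apply']
  have hL : aC (2*n) (i':ℤ) (j':ℤ)
      = coeff (M (2*i'+1) (2*j') (4*n - (2*i'+2*j'))) (xD (xD^[2*n-1] (X 0))) := by
    rw [aC_eq _ _ _ (Int.natCast_nonneg i') (Int.natCast_nonneg j'), hit]
    have e1 : ((2*(i':ℤ)+1)).toNat = 2*i'+1 := by omega
    have e2 : ((if Even (2*n) then 2*(j':ℤ) else 2*(j':ℤ)+1)).toNat = 2*j' := by
      rw [if_pos hE2]; omega
    have e3 : ((2*((2*n : ℕ):ℤ) - 2*(i':ℤ) - 2*(j':ℤ) - if Even (2*n) then 0 else 1)).toNat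
        = 4*n - (2*i'+2*j') := by
      rw [if_pos hE2]; omega
    rw [e1, e2, e3]
  have hR1 : aC (2*n-1) (i':ℤ) ((j':ℤ)-1)
      = if 1 ≤ j' then
          coeff (M (2*i'+1) (2*j'-1) ((4*n-1) - (2*i'+2*j'))) (xD^[2*n-1] (X 0)) else 0 := by
    by_cases hj1 : 1 ≤ j'
    · rw [if_pos hj1]
      have hc : (j':ℤ) - 1 = ((j'-1 : ℕ) : ℤ) := by omega
      rw [hc, aC_eq _ _ _ (Int.natCast_nonneg i') (Int.natCast_nonneg _)]
      have e1 : ((2*(i':ℤ)+1)).toNat = 2*i'+1 := by omega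
      have e2 : ((if Even (2*n-1) then 2*(((j'-1:ℕ)):ℤ) else 2*(((j'-1:ℕ)):ℤ)+1)).toNat
          = 2*j'-1 := by
        rw [if_neg hO]; omega
      have e3 : ((2*((2*n-1 : ℕ):ℤ) - 2*(i':ℤ) - 2*(((j'-1:ℕ)):ℤ)
          - if Even (2*n-1) then 0 else 1)).toNat = (4*n-1) - (2*i'+2*j') := by
        rw [if_neg hO]; omega
      rw [e1, e2, e3]
    · rw [if_neg hj1, aC_neg (by omega)]
  have hR2 : aC (2*n-1) ((i':ℤ)-1) (j':ℤ)
      = if 1 ≤ i' then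
          coeff (M (2*i'-1) (2*j'+1) ((4*n-1) - (2*i'+2*j'))) (xD^[2*n-1] (X 0)) else 0 := by
    by_cases hi1 : 1 ≤ i'
    · rw [if_pos hi1]
      have hc : (i':ℤ) - 1 = ((i'-1 : ℕ) : ℤ) := by omega
      rw [hc, aC_eq _ _ _ (Int.natCast_nonneg _) (Int.natCast_nonneg _)]
      have e1 : ((2*(((i'-1:ℕ)):ℤ)+1)).toNat = 2*i'-1 := by omega
      have e2 : ((if Even (2*n-1) then 2*(j':ℤ) else 2*(j':ℤ)+1)).toNat = 2*j'+1 := by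
        rw [if_neg hO]; omega
      have e3 : ((2*((2*n-1 : ℕ):ℤ) - 2*(((i'-1:ℕ)):ℤ) - 2*(j':ℤ)
          - if Even (2*n-1) then 0 else 1)).toNat = (4*n-1) - (2*i'+2*j') := by
        rw [if_neg hO]; omega
      rw [e1, e2, e3]
    · rw [if_neg hi1, aC_neg (by omega)]
  have hR3 : aC (2*n-1) ((i':ℤ)-1) ((j':ℤ)-1)
      = if 1 ≤ i' ∧ 1 ≤ j' then
          coeff (M (2*i'-1) (2*j'-1) ((4*n+1) - (2*i'+2*j'))) (xD^[2*n-1] (X 0)) else 0 := by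
    by_cases hij : 1 ≤ i' ∧ 1 ≤ j'
    · rw [if_pos hij]
      have hc1 : (i':ℤ) - 1 = ((i'-1 : ℕ) : ℤ) := by omega
      have hc2 : (j':ℤ) - 1 = ((j'-1 : ℕ) : ℤ) := by omega
      rw [hc1, hc2, aC_eq _ _ _ (Int.natCast_nonneg _) (Int.natCast_nonneg _)]
      have e1 : ((2*(((i'-1:ℕ)):ℤ)+1)).toNat = 2*i'-1 := by omega
      have e2 : ((if Even (2*n-1) then 2*(((j'-1:ℕ)):ℤ) else 2*(((j'-1:ℕ)):ℤ)+1)).toNat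
          = 2*j'-1 := by
        rw [if_neg hO]; omega
      have e3 : ((2*((2*n-1 : ℕ):ℤ) - 2*(((i'-1:ℕ)):ℤ) - 2*(((j'-1:ℕ)):ℤ)
          - if Even (2*n-1) then 0 else 1)).toNat = (4*n+1) - (2*i'+2*j') := by
        rw [if_neg hO]; omega
      rw [e1, e2, e3]
    · rw [aC_neg (by omega), if_neg hij]
  rw [hL, coeff_xD', hR1, hR2, hR3]
  have hA0 : ∀ a b c : ℕ, 4*n-1 < a+b+c →
      MvPolynomial.coeff (M a b c) (xD^[2*n-1] (X 0)) = 0 :=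
    fun a b c h => coeff_M_zero _ a b c (lt_of_le_of_lt hdeg h)
  rw [show 4*n - (2*i'+2*j') - 1 = 4*n-1 - (2*i'+2*j') by omega,
      show 2*i'+1-2 = 2*i'-1 by omega]
  congr 1
  congr 1
  · split_ifs with h1 h2 h3
    · push_cast; ring
    · exfalso; omega
    · rw [hA0 _ _ _ (by omega)]; ring
    · ring
  · split_ifs with h1 h2 h3
    · push_cast; ring
    · exfalso; omega
    · rw [hA0 _ _ _ (by omega)]; ring
    · ring
  · split_ifs with h1 h2 h3
    · by_cases hs : 2*i'+2*j' ≤ 4*n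
      · rw [show 4*n - (2*i'+2*j') + 1 = 4*n+1 - (2*i'+2*j') by omega]
        congr 1
        rw [Nat.cast_sub hs]
        push_cast
        ring
      · rw [hA0 _ _ _ (by omega), hA0 _ _ _ (by omega)]
        ring
    · exfalso; omega
    · exfalso; omega
    · ring
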